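/- The system is strongly exponentially stable if and only if there exist constants D ≥ 1 and 0 ≤ c < d such that Σ_{m=n}^∞ e^{d(m-n)} ‖A_m^n x‖ ≤ D e^{c n} ‖x‖ for all n ∈ ℕ and x ∈ X. -/

import Mathlib

open scoped BigOperators

/-- The evolution operator `A_m^n = A(m) ∘ ⋯ ∘ A(n+1)`, with `A_n^n = 1`. -/
noncomputable def evol {X : Type*} [NormedAddCommGroup X] [NormedSpace ℝ X]
    (A : ℕ → X →L[ℝ] X) (m n : ℕ) : X →L[ℝ] X :=
  ((List.range (m - n)).map (fun k => A (n + k + 1))).foldl (fun P B => B ∘L P) 1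

lemma geom_sum_Icc_le {r : ℝ} (hr0 : 0 ≤ r) (hr1 : r < 1) (n M : ℕ) :
    ∑ m ∈ Finset.Icc n M, r ^ (m - n) ≤ (1 - r)⁻¹ := by
  rw [← Finset.Ico_add_one_right_eq_Icc, Finset.sum_Ico_eq_sum_range]
  have h1 : ∑ i ∈ Finset.range (M + 1 - n), r ^ (n + i - n) =
      ∑ i ∈ Finset.range (M + 1 - n), r ^ i :=
    Finset.sum_congr rfl fun i _ => by rw [Nat.add_sub_cancel_left]
  rw [h1]
  calc ∑ i ∈ Finset.range (M + 1 - n), r ^ i ≤ ∑' i : ℕ, r ^ i :=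
        Summable.sum_le_tsum _ (fun i _ => pow_nonneg hr0 i) (summable_geometric_of_lt_one hr0 hr1)
    _ = (1 - r)⁻¹ := tsum_geometric_of_lt_one hr0 hr1

theorem stmt15 {X : Type*} [NormedAddCommGroup X] [NormedSpace ℝ X] [CompleteSpace X]
    (A : ℕ → X →L[ℝ] X) :
    (∃ N α β : ℝ, 1 ≤ N ∧ 0 < α ∧ 0 ≤ β ∧ β < α ∧
      ∀ n m : ℕ, n ≤ m → ∀ x : X,
        ‖evol A m n x‖ ≤ N * Real.exp (-α * ((m : ℝ) - n)) * Real.exp (β * n) * ‖x‖) ↔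
    (∃ D d c : ℝ, 1 ≤ D ∧ 0 ≤ c ∧ c < d ∧
      ∀ n : ℕ, ∀ x : X, ∀ M : ℕ, n ≤ M →
        ∑ m ∈ Finset.Icc n M, Real.exp (d * ((m : ℝ) - n)) * ‖evol A m n x‖
          ≤ D * Real.exp (c * n) * ‖x‖) := by
  constructor
  · rintro ⟨N, α, β, hN, hα, hβ0, hβα, h⟩
    set ε : ℝ := (α - β) / 3 with hε
    have hεpos : 0 < ε := by
      rw [hε]; linarith
    set r : ℝ := Real.exp (-ε) with hr
    have hr0 : 0 ≤ r := (Real.exp_pos _).le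
    have hr1 : r < 1 := Real.exp_lt_one_iff.mpr (by linarith)
    have h1r : 0 < 1 - r := by linarith
    have hinv : (0:ℝ) ≤ (1 - r)⁻¹ := by positivity
    have hN0 : (0:ℝ) ≤ N := by linarith
    refine ⟨N * (1 - r)⁻¹, β + 2 * ε, β + ε, ?_, by linarith, by linarith, ?_⟩
    · have h1 : (1:ℝ) ≤ (1 - r)⁻¹ := by
        rw [le_inv_comm₀ one_pos h1r]
        simp [hr0]
      nlinarith
    · intro n x M hnM
      have key : ∀ m ∈ Finset.Icc n M,
          Real.exp ((β + 2 * ε) * ((m : ℝ) - n)) * ‖evol A m n x‖ ≤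
            N * Real.exp (β * n) * ‖x‖ * r ^ (m - n) := by
        intro m hm
        have hnm : n ≤ m := (Finset.mem_Icc.mp hm).1
        have hcast : ((m : ℝ) - n) = ((m - n : ℕ) : ℝ) := by
          push_cast [Nat.cast_sub hnm]; ring
        have h2 := h n m hnm x
        have h4 : Real.exp ((β + 2 * ε) * ((m : ℝ) - n)) * Real.exp (-α * ((m : ℝ) - n))
            = r ^ (m - n) := by
          rw [← Real.exp_add, hr, ← Real.exp_nat_mul, hcast]
          congr 1
          rw [hε]; ring
        calc Real.exp ((β + 2 * ε) * ((m : ℝ) - n)) * ‖evol A m n x‖ ≤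
            Real.exp ((β + 2 * ε) * ((m : ℝ) - n)) *
              (N * Real.exp (-α * ((m : ℝ) - n)) * Real.exp (β * n) * ‖x‖) :=
              mul_le_mul_of_nonneg_left h2 (Real.exp_pos _).le
          _ = N * Real.exp (β * n) * ‖x‖ *
              (Real.exp ((β + 2 * ε) * ((m : ℝ) - n)) * Real.exp (-α * ((m : ℝ) - n))) := by
              ring
          _ = N * Real.exp (β * n) * ‖x‖ * r ^ (m - n) := by rw [h4]
      calc ∑ m ∈ Finset.Icc n M, Real.exp ((β + 2 * ε) * ((m : ℝ) - n)) * ‖evol A m n x‖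
          ≤ ∑ m ∈ Finset.Icc n M, N * Real.exp (β * n) * ‖x‖ * r ^ (m - n) :=
            Finset.sum_le_sum key
        _ = N * Real.exp (β * n) * ‖x‖ * ∑ m ∈ Finset.Icc n M, r ^ (m - n) := by
            rw [Finset.mul_sum]
        _ ≤ N * Real.exp (β * n) * ‖x‖ * (1 - r)⁻¹ := by
            apply mul_le_mul_of_nonneg_left (geom_sum_Icc_le hr0 hr1 n M)
            positivity
        _ = (N * (1 - r)⁻¹ * ‖x‖) * Real.exp (β * n) := by ring
        _ ≤ (N * (1 - r)⁻¹ * ‖x‖) * Real.exp ((β + ε) * n) := by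
            apply mul_le_mul_of_nonneg_left _ (by positivity)
            apply Real.exp_le_exp.mpr
            have hn0 : (0:ℝ) ≤ n := Nat.cast_nonneg n
            nlinarith
        _ = N * (1 - r)⁻¹ * Real.exp ((β + ε) * n) * ‖x‖ := by ring
  · rintro ⟨D, d, c, hD, hc0, hcd, h⟩
    refine ⟨D, d, c, hD, by linarith, hc0, hcd, ?_⟩
    intro n m hnm x
    have hsum := h n x m hnm
    have hmem : m ∈ Finset.Icc n m := Finset.mem_Icc.mpr ⟨hnm, le_refl m⟩
    have hsingle : Real.exp (d * ((m : ℝ) - n)) * ‖evol A m n x‖ ≤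
        ∑ k ∈ Finset.Icc n m, Real.exp (d * ((k : ℝ) - n)) * ‖evol A k n x‖ :=
      Finset.single_le_sum (f := fun (k : ℕ) => Real.exp (d * ((k : ℝ) - n)) * ‖evol A k n x‖)
        (fun k _ => by positivity) hmem
    have key : Real.exp (d * ((m : ℝ) - n)) * ‖evol A m n x‖ ≤
        D * Real.exp (c * n) * ‖x‖ := le_trans hsingle hsum
    have hpos : 0 < Real.exp (d * ((m : ℝ) - n)) := Real.exp_pos _
    have h5 : ‖evol A m n x‖ ≤
        (D * Real.exp (c * n) * ‖x‖) / Real.exp (d * ((m : ℝ) - n)) :=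
      (le_div_iff₀ hpos).mpr (by rw [mul_comm]; exact key)
    calc ‖evol A m n x‖ ≤
        (D * Real.exp (c * n) * ‖x‖) / Real.exp (d * ((m : ℝ) - n)) := h5
      _ = D * Real.exp (-d * ((m : ℝ) - n)) * Real.exp (c * n) * ‖x‖ := by
          rw [div_eq_mul_inv, ← Real.exp_neg, show -(d * ((m : ℝ) - n)) = -d * ((m : ℝ) - n) by ring]
          ring
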